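/- If a node with pending input exists in a linear pipeline, then the last such node is never blocked by lack of downstream queue space: either it is the final node (with unbounded output space), or all of its downstream queues are empty, hence it can be fired. -/
import Mathlib


/-- A firing of node `i` in a linear pipeline of `n` nodes with pending-input
counts `q`: the node consumes `d ≥ 1` pending inputs and enqueues `out ≤ B·d`
outputs at node `i+1` (nothing if `i` is the last node); the downstream queue
has finite capacity `C`, which the firing may not overflow. -/
def FireAt (n B C : ℕ) (i : Fin n) (q q' : Fin n → ℕ) : Prop :=
  ∃ d out : ℕ, 1 ≤ d ∧ d ≤ q i ∧ out ≤ B * d ∧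
    (∀ j : Fin n, q' j =
      if j = i then q i - d
      else if (j : ℕ) = (i : ℕ) + 1 then q j + out else q j) ∧
    (∀ j : Fin n, (j : ℕ) = (i : ℕ) + 1 → q j + out ≤ C)

/-- if some node of a linear pipeline has pending input, then the
last such node `m` is never blocked by lack of downstream queue space: all
nodes after `m` have empty queues (so `m`'s downstream queue, if any, is
empty); hence — given the downstream capacity `C` is at least the maximum
per-firing output `B` — even a maximal-output minimal firing of `m` fits in
the downstream queue, and node `m` can be fired. -/
theorem last_pending_node_fireable (n B C : ℕ) (hC : B ≤ C)
    (q : Fin n → ℕ) (m : Fin n) (hm : 0 < q m)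
    (hlargest : ∀ j : Fin n, 0 < q j → j ≤ m) :
    (∀ j : Fin n, m < j → q j = 0) ∧
    (∀ j : Fin n, (j : ℕ) = (m : ℕ) + 1 → q j + B * 1 ≤ C) ∧
    (∀ out : ℕ, out ≤ B * 1 → ∃ q', FireAt n B C m q q' ∧
      ∀ j : Fin n, (j : ℕ) = (m : ℕ) + 1 → q' j = q j + out) := by
  have hzero : ∀ j : Fin n, m < j → q j = 0 := by
    intro j hj
    by_contra h
    exact absurd (hlargest j (Nat.pos_of_ne_zero h)) (not_le.mpr hj)
  have hq1 : ∀ j : Fin n, (j : ℕ) = (m : ℕ) + 1 → q j + B * 1 ≤ C := by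
    intro j hj
    have : q j = 0 := hzero j (by simp [Fin.lt_def, hj])
    simpa [this] using hC
  refine ⟨hzero, hq1, fun out hout => ?_⟩
  refine ⟨fun j => if j = m then q m - 1
      else if (j : ℕ) = (m : ℕ) + 1 then q j + out else q j,
    ⟨1, out, le_refl 1, hm, hout, fun j => rfl, fun j hj => by
      have := hq1 j hj; omega⟩,
    fun j hj => ?_⟩
  have hne : j ≠ m := by
    intro h; subst h; omega
  simp [hne, hj]
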